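/- Suppose Γ(η) < r < 2β + γ for η ∈ (0, η₀), where η₀ = 2α(r − γ)/(2β + γ − r). Then the spreading speed c*(η) is decreasing in η on (0, η₀) and tends to zero as η increases to η₀: lim_{η → η₀⁻} c*(η) = 0. -/

import Mathlib

lemma aux_K_ge_four (μ : ℝ) : 4 ≤ (Real.exp μ + Real.exp (-μ))^2 := by
  have h : Real.exp μ * Real.exp (-μ) = 1 := by
    rw [← Real.exp_add]; simp
  nlinarith [sq_nonneg (Real.exp μ - Real.exp (-μ))]

lemma aux_K_ge_exp (μ : ℝ) : (Real.exp μ)^2 ≤ (Real.exp μ + Real.exp (-μ))^2 := by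
  nlinarith [Real.exp_pos μ, Real.exp_pos (-μ)]

-- K ≤ 4 + 36 μ² for 0 ≤ μ ≤ 1
lemma aux_K_le (μ : ℝ) (h0 : 0 ≤ μ) (h1 : μ ≤ 1) :
    (Real.exp μ + Real.exp (-μ))^2 ≤ 4 + 36 * μ^2 := by
  have h : Real.exp μ * Real.exp (-μ) = 1 := by rw [← Real.exp_add]; simp
  have h2 : Real.exp μ - Real.exp (-μ) ≤ 6 * μ := by
    have e1 : Real.exp μ - 1 ≤ μ * Real.exp μ := by
      have := Real.add_one_le_exp (-μ)
      have hp := Real.exp_pos μ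
      have : (-μ + 1) * Real.exp μ ≤ Real.exp (-μ) * Real.exp μ :=
        mul_le_mul_of_nonneg_right this (le_of_lt hp)
      rw [← Real.exp_add] at this
      simp at this
      nlinarith
    have e2 : Real.exp μ ≤ 3 := by
      calc Real.exp μ ≤ Real.exp 1 := Real.exp_le_exp.2 h1
      _ ≤ 3 := by nlinarith [Real.exp_one_lt_d9]
    have e3 : 1 - Real.exp (-μ) ≤ Real.exp μ - 1 := by
      nlinarith [Real.exp_pos μ, Real.exp_pos (-μ), sq_nonneg (Real.exp μ - 1)]
    nlinarith
  have h3 : 0 ≤ Real.exp μ - Real.exp (-μ) := by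
    have : Real.exp (-μ) ≤ Real.exp μ := Real.exp_le_exp.2 (by linarith)
    linarith
  nlinarith [sq_nonneg (Real.exp μ - Real.exp (-μ))]

-- cleared-denominator form of the root equation
lemma aux_cleared (α β γ τ r η μ L : ℝ) (hA : 0 < L + 2*α + η)
    (heq : -(L + 2*β + γ) + α*β*(Real.exp μ + Real.exp (-μ))^2/(L + 2*α + η)
      + r*Real.exp (-L*τ) = 0) :
    (L + 2*β + γ) * (L + 2*α + η)
      = α*β*(Real.exp μ + Real.exp (-μ))^2 + r*Real.exp (-L*τ)*(L + 2*α + η) := by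
  have hne : L + 2*α + η ≠ 0 := ne_of_gt hA
  field_simp at heq
  rw [neg_mul] at *
  linear_combination -heq

lemma aux_mono_false (α β γ r η₁ η₂ K L₁ L₂ E₁ E₂ : ℝ)
    (hα : 0 < α) (hβ : 0 < β) (hK : 0 < K) (hr : 0 < r)
    (h1 : 0 < η₁) (h12 : η₁ < η₂) (hL₁ : 0 < L₁) (hL₂ : 0 < L₂)
    (hLle : L₁ ≤ L₂) (hE : E₂ ≤ E₁) (hE₂ : 0 < E₂)
    (e1 : (L₁+2*β+γ)*(L₁+2*α+η₁) = α*β*K + r*E₁*(L₁+2*α+η₁))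
    (e2 : (L₂+2*β+γ)*(L₂+2*α+η₂) = α*β*K + r*E₂*(L₂+2*α+η₂)) : False := by
  have hA₁ : 0 < L₁ + 2*α + η₁ := by linarith
  have q1 : (L₁+2*β+γ - r*E₁)*(L₁+2*α+η₁) = α*β*K := by linear_combination e1
  have q2 : (L₂+2*β+γ - r*E₂)*(L₂+2*α+η₂) = α*β*K := by linear_combination e2
  have hαβK : 0 < α*β*K := by positivity
  have hP₁ : 0 < L₁+2*β+γ - r*E₁ := by nlinarith
  have hrE : r*E₂ ≤ r*E₁ := mul_le_mul_of_nonneg_left hE hr.le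
  have hgt : α*β*K < α*β*K := by
    calc α*β*K = (L₁+2*β+γ - r*E₁)*(L₁+2*α+η₁) := q1.symm
    _ < (L₂+2*β+γ - r*E₂)*(L₂+2*α+η₂) :=
        mul_lt_mul' (by linarith) (by linarith) (by linarith) (by linarith)
    _ = α*β*K := q2
  exact lt_irrefl _ hgt

lemma aux_upper (α β γ r η K L E : ℝ)
    (hα : 0 < α) (hβ : 0 < β) (hK : 0 < K) (hr : 0 < r) (hη : 0 < η)
    (hL : 0 < L) (hE : 0 < E) (hE1 : E ≤ 1)
    (e : (L+2*β+γ)*(L+2*α+η) = α*β*K + r*E*(L+2*α+η)) :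
    (L + 2*β + γ - r) * (2*α+η) ≤ α*β*K := by
  have hA : 0 < L + 2*α + η := by linarith
  have h1 : r*E*(L+2*α+η) ≤ r*1*(L+2*α+η) := by
    apply mul_le_mul_of_nonneg_right _ hA.le
    exact mul_le_mul_of_nonneg_left hE1 hr.le
  have h2 : (L+2*β+γ-r)*(L+2*α+η) ≤ α*β*K := by nlinarith
  have hαβK : 0 < α*β*K := by positivity
  nlinarith [mul_pos hα hβ]

lemma aux_gap (α β γ τ r η₁ η₂ K L₁ L₂ E₁ E₂ : ℝ)
    (hα : 0 < α) (hβ : 0 < β) (hK : 0 < K) (hr : 0 < r) (hτ : 0 ≤ τ)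
    (h1 : 0 < η₁) (h12 : η₁ < η₂) (hL₂ : 0 < L₂) (hL21 : L₂ < L₁)
    (hE : E₂ - E₁ ≤ τ*(L₁-L₂))
    (g1 : -(L₁+2*β+γ) + α*β*K/(L₁+2*α+η₁) + r*E₁ = 0)
    (g2 : -(L₂+2*β+γ) + α*β*K/(L₂+2*α+η₂) + r*E₂ = 0) :
    α*β*K*(η₂-η₁) ≤ (L₁-L₂)*(1 + α*β*K/(4*α^2) + r*τ)*((L₂+2*α+η₁)*(L₂+2*α+η₂)) := by
  have hA1 : 0 < L₂ + 2*α + η₁ := by linarith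
  have hA2 : 0 < L₂ + 2*α + η₂ := by linarith
  have hB1 : 0 < L₁ + 2*α + η₁ := by linarith
  have i0 : α*β*K/(L₂+2*α+η₁) - α*β*K/(L₂+2*α+η₂)
      = α*β*K*(η₂-η₁)/((L₂+2*α+η₁)*(L₂+2*α+η₂)) := by
    rw [div_sub_div _ _ hA1.ne' hA2.ne']
    ring
  have i : -(L₂+2*β+γ) + α*β*K/(L₂+2*α+η₁) + r*E₂
      = α*β*K*(η₂-η₁)/((L₂+2*α+η₁)*(L₂+2*α+η₂)) := by linarith
  have m1 : α*β*K/(L₂+2*α+η₁) - α*β*K/(L₁+2*α+η₁)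
      = α*β*K*(L₁-L₂)/((L₂+2*α+η₁)*(L₁+2*α+η₁)) := by
    rw [div_sub_div _ _ hA1.ne' hB1.ne']
    ring
  have m2 : α*β*K*(L₁-L₂)/((L₂+2*α+η₁)*(L₁+2*α+η₁)) ≤ α*β*K*(L₁-L₂)/((2*α)*(2*α)) := by
    gcongr
    · linarith
    · linarith
  have m3 : α*β*K*(L₁-L₂)/((2*α)*(2*α)) = (L₁-L₂)*(α*β*K/(4*α^2)) := by ring
  have hEr : r*(E₂-E₁) ≤ r*(τ*(L₁-L₂)) := mul_le_mul_of_nonneg_left hE hr.le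
  have ii : -(L₂+2*β+γ) + α*β*K/(L₂+2*α+η₁) + r*E₂
      ≤ (L₁-L₂)*(1 + α*β*K/(4*α^2) + r*τ) := by nlinarith
  rw [i, div_le_iff₀ (by positivity)] at ii
  linear_combination ii
lemma lem_EE (τ L₁ L₂ : ℝ) (hτ : 0 ≤ τ) (hL₂ : 0 < L₂) (h21 : L₂ < L₁) :
    Real.exp (-L₂*τ) - Real.exp (-L₁*τ) ≤ τ*(L₁ - L₂) := by
  have hprod : Real.exp (-L₁*τ) = Real.exp (-L₂*τ) * Real.exp (-(L₁ - L₂)*τ) := by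
    rw [← Real.exp_add]; congr 1; ring
  have h1 : 1 - (L₁ - L₂)*τ ≤ Real.exp (-(L₁ - L₂)*τ) := by
    have := Real.add_one_le_exp (-(L₁ - L₂)*τ)
    linarith
  have hE₂1 : Real.exp (-L₂*τ) ≤ 1 := by
    rw [← Real.exp_zero]
    apply Real.exp_le_exp.2
    nlinarith [mul_nonneg hL₂.le hτ]
  have hE₂0 : 0 < Real.exp (-L₂*τ) := Real.exp_pos _
  nlinarith [mul_le_mul_of_nonneg_left h1 hE₂0.le,
    mul_nonneg (sub_nonneg.2 hE₂1) (mul_nonneg hτ (show (0:ℝ) ≤ L₁ - L₂ by linarith))]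

lemma lem_KleM (μ M : ℝ) (h0 : 0 ≤ μ) (hM : μ ≤ M) :
    (Real.exp μ + Real.exp (-μ))^2 ≤ (Real.exp M + 1)^2 := by
  have h1 : Real.exp μ + Real.exp (-μ) ≤ Real.exp M + 1 := by
    have e1 : Real.exp μ ≤ Real.exp M := Real.exp_le_exp.2 hM
    have e2 : Real.exp (-μ) ≤ 1 := by
      rw [← Real.exp_zero]; exact Real.exp_le_exp.2 (by linarith)
    linarith
  have h2 : (0:ℝ) ≤ Real.exp μ + Real.exp (-μ) := by positivity
  exact pow_le_pow_left₀ h2 h1 2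

set_option maxHeartbeats 1000000 in
lemma lem_gapM (α β γ τ r η₀ η₁ η₂ μ L₁ L₂ M : ℝ)
    (hα : 0 < α) (hβ : 0 < β) (hτ : 0 ≤ τ)
    (hrpos : 0 < r) (hr2 : r < 2*β+γ)
    (h1 : 0 < η₁) (h12 : η₁ < η₂) (h2 : η₂ < η₀)
    (hμ : 0 < μ) (hμM : μ ≤ M)
    (hL₁ : 0 < L₁) (hL₂ : 0 < L₂) (hL21 : L₂ < L₁)
    (g1 : -(L₁ + 2*β + γ) + α*β*(Real.exp μ + Real.exp (-μ))^2/(L₁ + 2*α + η₁)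
      + r*Real.exp (-L₁*τ) = 0)
    (g2 : -(L₂ + 2*β + γ) + α*β*(Real.exp μ + Real.exp (-μ))^2/(L₂ + 2*α + η₂)
      + r*Real.exp (-L₂*τ) = 0) :
    4*α*β*(η₂-η₁) / ((1 + α*β*(Real.exp M + 1)^2/(4*α^2) + r*τ)
      * (β*(Real.exp M + 1)^2/2 + 2*α + η₀)^2) ≤ L₁ - L₂ := by
  obtain ⟨KM, hKMdef⟩ : ∃ x : ℝ, x = (Real.exp M + 1)^2 := ⟨_, rfl⟩
  have hKMpos : 0 < KM := by rw [hKMdef]; positivity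
  obtain ⟨U, hUdef⟩ : ∃ x : ℝ, x = β*KM/2 := ⟨_, rfl⟩
  have hUpos : 0 < U := by rw [hUdef]; exact div_pos (mul_pos hβ hKMpos) two_pos
  obtain ⟨CM, hCMdef⟩ : ∃ x : ℝ, x = 1 + α*β*KM/(4*α^2) + r*τ := ⟨_, rfl⟩
  have hCMpos : 0 < CM := by
    have ha : 0 ≤ r*τ := mul_nonneg hrpos.le hτ
    have hb : 0 < α*β*KM/(4*α^2) := div_pos (mul_pos (mul_pos hα hβ) hKMpos) (by positivity)
    rw [hCMdef]; linarith
  have hQpos : 0 < CM*(U+2*α+η₀)^2 := mul_pos hCMpos (pow_pos (by linarith) 2)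
  have hgoal : 4*α*β*(η₂-η₁) / ((1 + α*β*(Real.exp M + 1)^2/(4*α^2) + r*τ)
      * (β*(Real.exp M + 1)^2/2 + 2*α + η₀)^2) = 4*α*β*(η₂-η₁)/(CM*(U+2*α+η₀)^2) := by
    rw [hCMdef, hUdef, hKMdef]
  rw [hgoal, div_le_iff₀ hQpos]
  have hKpos : 0 < (Real.exp μ + Real.exp (-μ))^2 := by positivity
  have hK4 : 4 ≤ (Real.exp μ + Real.exp (-μ))^2 := aux_K_ge_four μ
  have hKM : (Real.exp μ + Real.exp (-μ))^2 ≤ KM := by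
    rw [hKMdef]; exact lem_KleM μ M hμ.le hμM
  have e2 := aux_cleared α β γ τ r η₂ μ L₂ (by linarith) g2
  have hup := aux_upper α β γ r η₂ ((Real.exp μ + Real.exp (-μ))^2)
    L₂ (Real.exp (-L₂*τ)) hα hβ hKpos hrpos (by linarith) hL₂
    (Real.exp_pos _)
    (by rw [← Real.exp_zero]
        apply Real.exp_le_exp.2
        rw [neg_mul]
        exact neg_nonpos.2 (mul_nonneg hL₂.le hτ))
    e2
  clear e2
  have hL₂U : L₂ ≤ U := by
    have ha : L₂*(2*α) ≤ (L₂ + 2*β + γ - r)*(2*α + η₂) := by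
      apply mul_le_mul (by linarith) (by linarith) (by linarith) (by linarith)
    have hb : α*β*(Real.exp μ + Real.exp (-μ))^2 ≤ α*β*KM :=
      mul_le_mul_of_nonneg_left hKM (mul_pos hα hβ).le
    rw [hUdef]
    nlinarith [ha, hb, hup, hα]
  clear hup
  have hdpos : 0 < L₁ - L₂ := by linarith
  have hC : 1 + α*β*(Real.exp μ + Real.exp (-μ))^2/(4*α^2) + r*τ ≤ CM := by
    rw [hCMdef]
    have h3 : α*β*(Real.exp μ + Real.exp (-μ))^2/(4*α^2) ≤ α*β*KM/(4*α^2) := by gcongr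
    linarith
  clear hKM
  have hPpos : 0 < (L₂+2*α+η₁)*(L₂+2*α+η₂) := by
    apply mul_pos <;> linarith
  have hP : (L₂+2*α+η₁)*(L₂+2*α+η₂) ≤ (U+2*α+η₀)^2 := by
    have ha : L₂+2*α+η₁ ≤ U+2*α+η₀ := by linarith
    have hb : L₂+2*α+η₂ ≤ U+2*α+η₀ := by linarith
    nlinarith [mul_le_mul ha hb (show (0:ℝ) ≤ L₂+2*α+η₂ by linarith)
      (show (0:ℝ) ≤ U+2*α+η₀ by linarith)]
  have hRHS : (L₁ - L₂)*(1 + α*β*(Real.exp μ + Real.exp (-μ))^2/(4*α^2) + r*τ)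
        *((L₂+2*α+η₁)*(L₂+2*α+η₂))
      ≤ (L₁ - L₂)*CM*(U+2*α+η₀)^2 :=
    le_trans
      (mul_le_mul_of_nonneg_right (mul_le_mul_of_nonneg_left hC hdpos.le) hPpos.le)
      (mul_le_mul_of_nonneg_left hP (mul_pos hdpos hCMpos).le)
  have h4 : 4*α*β*(η₂-η₁) ≤ α*β*(Real.exp μ + Real.exp (-μ))^2*(η₂-η₁) := by
    nlinarith [mul_nonneg (mul_nonneg (mul_pos hα hβ).le (sub_nonneg.2 hK4))
      (show (0:ℝ) ≤ η₂-η₁ by linarith)]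
  have hEE := lem_EE τ L₁ L₂ hτ hL₂ hL21
  have hgap := aux_gap α β γ τ r η₁ η₂ ((Real.exp μ + Real.exp (-μ))^2)
    L₁ L₂ (Real.exp (-L₁*τ)) (Real.exp (-L₂*τ))
    hα hβ hKpos hrpos hτ h1 h12 hL₂ hL21 hEE g1 g2
  linarith [hgap, hRHS, h4]

lemma lem_growth (α β γ τ r η μ L D : ℝ) (hα : 0 < α) (hβ : 0 < β) (hrpos : 0 < r)
    (hη : 0 < η) (hL : 0 < L) (hμ : 0 ≤ μ)
    (hD1 : 2*β + γ ≤ D) (hD2 : 2*α + η ≤ D)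
    (e : (L+2*β+γ)*(L+2*α+η)
      = α*β*(Real.exp μ + Real.exp (-μ))^2 + r*Real.exp (-L*τ)*(L+2*α+η)) :
    Real.sqrt (α*β) * Real.exp μ ≤ L + D := by
  have hKexp : (Real.exp μ)^2 ≤ (Real.exp μ + Real.exp (-μ))^2 := by
    nlinarith [Real.exp_pos μ, Real.exp_pos (-μ)]
  have hs2 : Real.sqrt (α*β)^2 = α*β := Real.sq_sqrt (by positivity)
  have hs2' : Real.sqrt (α*β)^2*(Real.exp μ)^2 = α*β*(Real.exp μ)^2 := by rw [hs2]
  have hEpos : 0 < Real.exp (-L*τ) := Real.exp_pos _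
  have hApos : 0 < L + 2*α + η := by linarith
  have hlow : α*β*(Real.exp μ)^2 ≤ (L + 2*β + γ)*(L + 2*α + η) := by
    nlinarith [mul_pos (mul_pos hrpos hEpos) hApos,
      mul_nonneg (mul_pos hα hβ).le (sub_nonneg.2 hKexp)]
  have hsq : (Real.sqrt (α*β) * Real.exp μ)^2 ≤ (L + D)^2 := by
    nlinarith [hlow, hs2', mul_nonneg (sub_nonneg.2 hD1) (sub_nonneg.2 hD2),
      mul_nonneg hL.le (sub_nonneg.2 hD1), mul_nonneg hL.le (sub_nonneg.2 hD2)]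
  have h1 : 0 ≤ Real.sqrt (α*β) * Real.exp μ := by positivity
  have h2 : 0 ≤ L + D := by linarith
  nlinarith [hsq]

lemma lem_Bbound (sαβ M μ B₁ D L : ℝ) (hs : 0 < sαβ) (hD : 0 < D) (hB : 0 < B₁)
    (hM : sαβ*M = 4*(B₁+D) + sαβ) (hM1 : 1 < M) (hcon : M < μ)
    (hg : sαβ * Real.exp μ ≤ L + D) : B₁*μ < L := by
  have hμ1 : 1 ≤ μ := by linarith
  have hμpos : 0 < μ := by linarith
  have hexp : (1 + μ/2)^2 ≤ Real.exp μ := by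
    have e1 : 1 + μ/2 ≤ Real.exp (μ/2) := by
      have := Real.add_one_le_exp (μ/2); linarith
    have e2 : (0:ℝ) ≤ 1 + μ/2 := by linarith
    calc (1 + μ/2)^2 ≤ (Real.exp (μ/2))^2 := pow_le_pow_left₀ e2 e1 2
      _ = Real.exp μ := by rw [sq, ← Real.exp_add]; congr 1; ring
  have hexp2 : μ^2/4 ≤ Real.exp μ := by nlinarith [hexp]
  have q2 : 4*(B₁+D) + sαβ < sαβ*μ := by
    rw [← hM]; exact mul_lt_mul_of_pos_left hcon hs
  have hlam_lb : sαβ*(μ^2/4) - D ≤ L := by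
    have h5 : sαβ*(μ^2/4) ≤ sαβ*Real.exp μ := mul_le_mul_of_nonneg_left hexp2 hs.le
    linarith
  nlinarith [mul_le_mul_of_nonneg_left q2.le (show (0:ℝ) ≤ μ/4 by linarith),
    mul_nonneg (sub_nonneg.2 hμ1) hD.le, mul_pos hμpos hs]

lemma lem_hub (α β γ τ r η μ L : ℝ)
    (hα : 0 < α) (hβ : 0 < β) (hrpos : 0 < r) (hr2 : r < 2*β+γ) (hτ : 0 ≤ τ)
    (hη : 0 < η) (hμ0 : 0 < μ) (hμ1 : μ ≤ 1) (hL : 0 < L)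
    (hμsq : 18*β*μ^2 = 4*α*β/(2*α+η) - (2*β+γ) + r)
    (e : (L+2*β+γ)*(L+2*α+η)
      = α*β*(Real.exp μ + Real.exp (-μ))^2 + r*Real.exp (-L*τ)*(L+2*α+η)) :
    L ≤ 36*β*μ^2 := by
  have hApos : 0 < 2*α+η := by linarith
  have hAne : (2*α+η) ≠ 0 := ne_of_gt hApos
  have hKpos : 0 < (Real.exp μ + Real.exp (-μ))^2 := by positivity
  have hup := aux_upper α β γ r η ((Real.exp μ + Real.exp (-μ))^2)
    L (Real.exp (-L*τ)) hα hβ hKpos hrpos hη hL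
    (Real.exp_pos _)
    (by rw [← Real.exp_zero]
        apply Real.exp_le_exp.2
        nlinarith [mul_nonneg hL.le hτ])
    e
  have hKle := aux_K_le μ hμ0.le hμ1
  have h6 : (4*α*β/(2*α+η) - (2*β+γ) + r)*(2*α+η) = 4*α*β - (2*β+γ-r)*(2*α+η) := by
    field_simp
    ring
  have h6' : (18*β*μ^2)*(2*α+η) = 4*α*β - (2*β+γ-r)*(2*α+η) := by
    rw [hμsq]; exact h6
  have h5 : (L + 2*β+γ-r)*(2*α+η) ≤ α*β*(4+36*μ^2) := by
    have := mul_le_mul_of_nonneg_left hKle (mul_pos hα hβ).le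
    linarith
  have h7 : L*(2*α+η) ≤ (36*β*μ^2)*(2*α+η) := by
    nlinarith [h5, h6', mul_nonneg (mul_nonneg hβ.le (sq_nonneg μ)) hη.le]
  exact le_of_mul_le_mul_right h7 hApos

set_option maxHeartbeats 1000000 in
/-- Let `α, β, γ > 0`, `τ ≥ 0` and `γ < r < 2β + γ`, and set
`η₀ = 2α(r − γ)/(2β + γ − r)` (so that `Γ(η) = γ + 2βη/(2α+η) < r` precisely for
`η ∈ (0, η₀)`).  For `η ∈ (0, η₀)` and `μ ≥ 0` let `lam μ η` be the unique positive root of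
`F(λ, μ, η) = −(λ + 2β + γ) + αβ(e^μ + e^{−μ})²/(λ + 2α + η) + r e^{−λτ} = 0`, and let
`c*(η) = inf_{μ>0} lam μ η / μ`.  Then `c*` is decreasing on `(0, η₀)` and `c*(η) → 0`
as `η → η₀⁻`. -/
theorem speed_decreasing_in_bad_mortality_subcritical
    (α β γ τ r : ℝ)
    (hα : 0 < α) (hβ : 0 < β) (hγ : 0 < γ) (hτ : 0 ≤ τ)
    (hr : γ < r) (hr2 : r < 2 * β + γ)
    (η₀ : ℝ) (hη₀ : η₀ = 2 * α * (r - γ) / (2 * β + γ - r))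
    (hΓ : ∀ η ∈ Set.Ioo 0 η₀, γ + 2 * β * η / (2 * α + η) < r)
    (lam : ℝ → ℝ → ℝ)
    (hlam : ∀ η ∈ Set.Ioo 0 η₀, ∀ μ : ℝ, 0 ≤ μ → 0 < lam μ η ∧
      -(lam μ η + 2 * β + γ)
        + α * β * (Real.exp μ + Real.exp (-μ)) ^ 2 / (lam μ η + 2 * α + η)
        + r * Real.exp (-(lam μ η) * τ) = 0)
    (cstar : ℝ → ℝ)
    (hcstar : ∀ η ∈ Set.Ioo 0 η₀,
      cstar η = sInf {c : ℝ | ∃ μ : ℝ, 0 < μ ∧ c = lam μ η / μ}) :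
    StrictAntiOn cstar (Set.Ioo 0 η₀) ∧
    Filter.Tendsto cstar (nhdsWithin η₀ (Set.Ioo 0 η₀)) (nhds 0) := by
  have hβγr : 0 < 2*β + γ - r := by linarith
  have hrγ : 0 < r - γ := by linarith
  have hrpos : 0 < r := by linarith
  have hη₀pos : 0 < η₀ := by rw [hη₀]; positivity
  have hA₀ : (2*β + γ - r) * (2*α + η₀) = 4*α*β := by
    rw [hη₀]; field_simp; ring
  have key : ∀ η ∈ Set.Ioo 0 η₀, ∀ μ : ℝ, 0 ≤ μ →
      (lam μ η + 2*β + γ) * (lam μ η + 2*α + η)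
        = α*β*(Real.exp μ + Real.exp (-μ))^2
          + r*Real.exp (-(lam μ η)*τ)*(lam μ η + 2*α + η) := by
    intro η hη μ hμ
    obtain ⟨hL, heq⟩ := hlam η hη μ hμ
    exact aux_cleared α β γ τ r η μ _ (by have := hη.1; linarith) heq
  have hSbdd : ∀ η ∈ Set.Ioo 0 η₀,
      BddBelow {c : ℝ | ∃ μ : ℝ, 0 < μ ∧ c = lam μ η / μ} := by
    intro η hη
    refine ⟨0, fun c hc => ?_⟩
    obtain ⟨μ, hμ, rfl⟩ := hc
    have hL := (hlam η hη μ hμ.le).1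
    positivity
  have hSne : ∀ η ∈ Set.Ioo 0 η₀,
      Set.Nonempty {c : ℝ | ∃ μ : ℝ, 0 < μ ∧ c = lam μ η / μ} :=
    fun η _ => ⟨lam 1 η / 1, 1, one_pos, rfl⟩
  have hc0 : ∀ η ∈ Set.Ioo 0 η₀, 0 ≤ cstar η := by
    intro η hη
    rw [hcstar η hη]
    refine le_csInf (hSne η hη) fun c hc => ?_
    obtain ⟨μ, hμ, rfl⟩ := hc
    have hL := (hlam η hη μ hμ.le).1
    positivity
  have hcle : ∀ η ∈ Set.Ioo 0 η₀, ∀ μ : ℝ, 0 < μ → cstar η ≤ lam μ η / μ := by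
    intro η hη μ hμ
    rw [hcstar η hη]
    exact csInf_le (hSbdd η hη) ⟨μ, hμ, rfl⟩
  constructor
  · -- StrictAntiOn
    intro η₁ hη₁ η₂ hη₂ h12
    have hΔ : 0 < η₂ - η₁ := by linarith [hη₁.1]
    have mono : ∀ μ : ℝ, 0 ≤ μ → lam μ η₂ < lam μ η₁ := by
      intro μ hμ
      by_contra h
      push_neg at h
      have hL₁ := (hlam η₁ hη₁ μ hμ).1
      have hL₂ := (hlam η₂ hη₂ μ hμ).1
      have hK : 0 < (Real.exp μ + Real.exp (-μ))^2 := by positivity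
      have hE : Real.exp (-(lam μ η₂)*τ) ≤ Real.exp (-(lam μ η₁)*τ) := by
        apply Real.exp_le_exp.2
        exact mul_le_mul_of_nonneg_right (neg_le_neg h) hτ
      exact aux_mono_false α β γ r η₁ η₂ _ _ _ _ _ hα hβ hK hrpos hη₁.1 h12 hL₁ hL₂
        h hE (Real.exp_pos _) (key η₁ hη₁ μ hμ) (key η₂ hη₂ μ hμ)
    obtain ⟨B₁, hB₁def⟩ : ∃ x : ℝ, x = lam 1 η₁ + 1 := ⟨_, rfl⟩
    have hB₁pos : 0 < B₁ := by
      have := (hlam η₁ hη₁ 1 one_pos.le).1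
      rw [hB₁def]; linarith
    obtain ⟨D, hDdef⟩ : ∃ x : ℝ, x = 2*β + γ + 2*α + η₀ := ⟨_, rfl⟩
    have hDpos : 0 < D := by rw [hDdef]; linarith
    obtain ⟨sαβ, hsdef⟩ : ∃ x : ℝ, x = Real.sqrt (α*β) := ⟨_, rfl⟩
    have hspos : 0 < sαβ := by rw [hsdef]; exact Real.sqrt_pos.2 (by positivity)
    obtain ⟨M, hMdef⟩ : ∃ x : ℝ, x = 4/sαβ*(B₁+D) + 1 := ⟨_, rfl⟩
    have hM1 : 1 < M := by
      have h0 : 0 < 4/sαβ*(B₁+D) := mul_pos (by positivity) (by linarith)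
      rw [hMdef]; linarith
    have hMpos : 0 < M := by linarith
    obtain ⟨ε, hεdef⟩ : ∃ x : ℝ,
        x = 4*α*β*(η₂-η₁) / ((1 + α*β*(Real.exp M + 1)^2/(4*α^2) + r*τ)
          * (β*(Real.exp M + 1)^2/2 + 2*α + η₀)^2) := ⟨_, rfl⟩
    have hεpos : 0 < ε := by
      rw [hεdef]
      apply div_pos (by positivity)
      apply mul_pos
      · have ha : 0 ≤ r*τ := mul_nonneg hrpos.le hτ
        have hb : 0 < α*β*(Real.exp M + 1)^2/(4*α^2) := by positivity
        linarith
      · have hc : 0 < β*(Real.exp M + 1)^2/2 := by positivity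
        apply pow_pos; linarith
    have gapM : ∀ μ : ℝ, 0 < μ → μ ≤ M → ε ≤ lam μ η₁ - lam μ η₂ := by
      intro μ hμ hμM
      have hL₁ := (hlam η₁ hη₁ μ hμ.le).1
      have hL₂ := (hlam η₂ hη₂ μ hμ.le).1
      have hL21 : lam μ η₂ < lam μ η₁ := mono μ hμ.le
      have h := lem_gapM α β γ τ r η₀ η₁ η₂ μ (lam μ η₁) (lam μ η₂) M
        hα hβ hτ hrpos hr2 hη₁.1 h12 hη₂.2 hμ hμM hL₁ hL₂ hL21
        ((hlam η₁ hη₁ μ hμ.le).2) ((hlam η₂ hη₂ μ hμ.le).2)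
      rw [hεdef]
      exact h
    have growth : ∀ μ : ℝ, 0 ≤ μ → sαβ * Real.exp μ ≤ lam μ η₁ + D := by
      intro μ hμ
      rw [hsdef]
      exact lem_growth α β γ τ r η₁ μ (lam μ η₁) D hα hβ hrpos hη₁.1
        ((hlam η₁ hη₁ μ hμ).1) hμ (by rw [hDdef]; linarith)
        (by rw [hDdef]; linarith [hη₁.2]) (key η₁ hη₁ μ hμ)
    obtain ⟨ε', hε'def⟩ : ∃ x : ℝ, x = min 1 (ε/(2*M)) := ⟨_, rfl⟩
    have hε'pos : 0 < ε' := by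
      rw [hε'def]
      exact lt_min one_pos (div_pos hεpos (by linarith))
    have hlt : sInf {c : ℝ | ∃ μ : ℝ, 0 < μ ∧ c = lam μ η₁ / μ} < cstar η₁ + ε' := by
      rw [hcstar η₁ hη₁]
      linarith
    obtain ⟨c, hcS, hclt⟩ := exists_lt_of_csInf_lt (hSne η₁ hη₁) hlt
    obtain ⟨μ, hμpos, rfl⟩ := hcS
    have hcB : lam μ η₁ / μ < B₁ := by
      have h1 : cstar η₁ ≤ lam 1 η₁ / 1 := hcle η₁ hη₁ 1 one_pos
      have h2 : ε' ≤ 1 := by rw [hε'def]; exact min_le_left _ _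
      rw [div_one] at h1
      rw [hB₁def]
      linarith
    have hμM : μ ≤ M := by
      by_contra hcon
      push_neg at hcon
      have q1 : sαβ*M = 4*(B₁+D) + sαβ := by
        rw [hMdef]
        field_simp
      have hBμ : B₁*μ < lam μ η₁ :=
        lem_Bbound sαβ M μ B₁ D (lam μ η₁) hspos hDpos hB₁pos q1 hM1 hcon
          (growth μ (by linarith))
      have hBlt : B₁ < lam μ η₁/μ := by
        rw [lt_div_iff₀ (by linarith : (0:ℝ) < μ)]; linarith
      linarith
    have hgapμ := gapM μ hμpos hμM
    have hη₂le : cstar η₂ ≤ lam μ η₂ / μ := hcle η₂ hη₂ μ hμpos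
    have hdd : ε/M ≤ (lam μ η₁ - lam μ η₂)/μ := by
      have hstep : ε/M ≤ ε/μ := by
        rw [div_le_div_iff₀ hMpos hμpos]
        exact mul_le_mul_of_nonneg_left hμM hεpos.le
      exact le_trans hstep ((div_le_div_iff_of_pos_right hμpos).2 hgapμ)
    have hsplit : lam μ η₂/μ = lam μ η₁/μ - (lam μ η₁ - lam μ η₂)/μ := by ring
    have h2M : ε/M = 2*(ε/(2*M)) := by ring
    have hε'2 : ε' ≤ ε/(2*M) := by rw [hε'def]; exact min_le_right _ _
    have hpos2 : 0 < ε/(2*M) := div_pos hεpos (by linarith)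
    linarith
  · -- Tendsto
    have hGpos : ∀ η ∈ Set.Ioo 0 η₀, 0 < 4*α*β/(2*α+η) - (2*β+γ) + r := by
      intro η hη
      have h3 : (2*β+γ-r)*(2*α+η) < 4*α*β := by
        nlinarith [mul_pos hβγr (sub_pos.2 hη.2)]
      have h4 : 2*β+γ-r < 4*α*β/(2*α+η) := by
        rw [lt_div_iff₀ (by have := hη.1; linarith)]; linarith
      linarith
    have hub : ∀ η ∈ Set.Ioo 0 η₀, 4*α*β/(2*α+η) - (2*β+γ) + r ≤ 18*β →
        cstar η ≤ 36*β*Real.sqrt ((4*α*β/(2*α+η) - (2*β+γ) + r)/(18*β)) := by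
      intro η hη hG18
      have hGp := hGpos η hη
      obtain ⟨μ, hμdef⟩ : ∃ x : ℝ,
          x = Real.sqrt ((4*α*β/(2*α+η) - (2*β+γ) + r)/(18*β)) := ⟨_, rfl⟩
      have hμpos : 0 < μ := by
        rw [hμdef]; exact Real.sqrt_pos.2 (div_pos hGp (by positivity))
      have hμsq : μ^2 = (4*α*β/(2*α+η) - (2*β+γ) + r)/(18*β) := by
        rw [hμdef]; exact Real.sq_sqrt (div_pos hGp (by positivity)).le
      have hμ1 : μ ≤ 1 := by
        have hle : (4*α*β/(2*α+η) - (2*β+γ) + r)/(18*β) ≤ 1 := by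
          rw [div_le_one (by positivity)]; linarith
        rw [hμdef]
        calc Real.sqrt ((4*α*β/(2*α+η) - (2*β+γ) + r)/(18*β))
            ≤ Real.sqrt 1 := Real.sqrt_le_sqrt hle
          _ = 1 := Real.sqrt_one
      have h18 : 18*β*μ^2 = 4*α*β/(2*α+η) - (2*β+γ) + r := by
        rw [hμsq]; field_simp
      have hL := (hlam η hη μ hμpos.le).1
      have hL36 := lem_hub α β γ τ r η μ (lam μ η) hα hβ hrpos hr2 hτ hη.1
        hμpos hμ1 hL h18 (key η hη μ hμpos.le)
      calc cstar η ≤ lam μ η/μ := hcle η hη μ hμpos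
        _ ≤ 36*β*μ := by
            rw [div_le_iff₀ hμpos]; nlinarith [hL36, sq_nonneg μ]
        _ = 36*β*Real.sqrt ((4*α*β/(2*α+η) - (2*β+γ) + r)/(18*β)) := by rw [hμdef]
    have hGcont : Filter.Tendsto (fun η => 4*α*β/(2*α+η) - (2*β+γ) + r)
        (nhdsWithin η₀ (Set.Ioo 0 η₀)) (nhds 0) := by
      have hne : (2*α+η₀) ≠ 0 := by positivity
      have hc : ContinuousAt (fun η : ℝ => 4*α*β/(2*α+η) - (2*β+γ) + r) η₀ := by
        apply ContinuousAt.add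
        apply ContinuousAt.sub
        · exact continuousAt_const.div (continuousAt_const.add continuousAt_id) hne
        · exact continuousAt_const
        · exact continuousAt_const
      have hval : 4*α*β/(2*α+η₀) - (2*β+γ) + r = 0 := by
        have h8 : 4*α*β/(2*α+η₀) = 2*β+γ-r := by
          rw [div_eq_iff hne]; linarith [hA₀]
        rw [h8]; ring
      have h9 := hc.tendsto
      rw [hval] at h9
      exact h9.mono_left nhdsWithin_le_nhds
    have hbnd : Filter.Tendsto
        (fun η => 36*β*Real.sqrt ((4*α*β/(2*α+η) - (2*β+γ) + r)/(18*β)))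
        (nhdsWithin η₀ (Set.Ioo 0 η₀)) (nhds 0) := by
      have h1 : Filter.Tendsto (fun η => (4*α*β/(2*α+η) - (2*β+γ) + r)/(18*β))
          (nhdsWithin η₀ (Set.Ioo 0 η₀)) (nhds 0) := by
        have := hGcont.div_const (18*β)
        simpa using this
      have h2 : Filter.Tendsto
          (fun η => Real.sqrt ((4*α*β/(2*α+η) - (2*β+γ) + r)/(18*β)))
          (nhdsWithin η₀ (Set.Ioo 0 η₀)) (nhds 0) := by
        have := (Real.continuous_sqrt.tendsto 0).comp h1
        simpa [Function.comp_def] using this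
      have := h2.const_mul (36*β)
      simpa using this
    apply squeeze_zero' ?_ ?_ hbnd
    · filter_upwards [self_mem_nhdsWithin] with η hη using hc0 η hη
    · have hev : ∀ᶠ η in nhdsWithin η₀ (Set.Ioo 0 η₀),
          4*α*β/(2*α+η) - (2*β+γ) + r < 18*β :=
        hGcont.eventually_lt_const (by positivity)
      filter_upwards [hev, self_mem_nhdsWithin] with η h1 h2 using hub η h2 h1.le
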